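/- Let h : X₁ → X₂ be continuous with μ₀ a full Borel probability measure on X₁ such that μ₀(Inj_h) = 1, where Inj_h = {x : h⁻¹(h(x)) = {x}}. If A₁, A₂ are closed subsets of X₁ with μ₀(A₁ ∩ A₂) = 0, then (h_*μ₀)(h(A₁) ∩ h(A₂)) = 0. -/

import Mathlib

open MeasureTheory

/-- if `μ₀` is a full Borel probability measure on `X₁`, `h` is
continuous with `μ₀(Inj_h) = 1`, and `A₁, A₂` are closed with
`μ₀(A₁ ∩ A₂) = 0`, then `(h_*μ₀)(h(A₁) ∩ h(A₂)) = 0`. -/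
theorem stmt_7 {X₁ X₂ : Type*} [MetricSpace X₁] [MetricSpace X₂]
    [CompactSpace X₁] [CompactSpace X₂]
    [MeasurableSpace X₁] [BorelSpace X₁] [MeasurableSpace X₂] [BorelSpace X₂]
    (h : X₁ → X₂) (hh : Continuous h)
    (μ₀ : Measure X₁) [IsProbabilityMeasure μ₀]
    (hfull : ∀ U : Set X₁, IsOpen U → U.Nonempty → 0 < μ₀ U)
    (hinj : μ₀ {x : X₁ | h ⁻¹' {h x} = {x}} = 1)
    (A₁ A₂ : Set X₁) (hA₁ : IsClosed A₁) (hA₂ : IsClosed A₂)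
    (hzero : μ₀ (A₁ ∩ A₂) = 0) :
    μ₀.map h (h '' A₁ ∩ h '' A₂) = 0 := by
  set S : Set X₁ := {x : X₁ | h ⁻¹' {h x} = {x}} with hS
  -- S is measurable: its complement is a countable union of compact images
  have hmeasS : MeasurableSet S := by
    have hcompl : Sᶜ = ⋃ n : ℕ,
        (fun p : X₁ × X₁ => p.1) '' {p : X₁ × X₁ | h p.1 = h p.2 ∧ 1/(n+1 : ℝ) ≤ dist p.1 p.2} := by
      ext x
      simp only [Set.mem_compl_iff, Set.mem_setOf_eq, Set.mem_iUnion, Set.mem_image, hS]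
      constructor
      · intro hx
        have : ∃ y, h y = h x ∧ y ≠ x := by
          by_contra hc
          push_neg at hc
          apply hx
          ext y
          simp only [Set.mem_preimage, Set.mem_singleton_iff]
          exact ⟨fun hy => hc y hy, fun hy => by rw [hy]⟩
        obtain ⟨y, hy, hyx⟩ := this
        have hd : 0 < dist x y := dist_pos.mpr (Ne.symm hyx)
        obtain ⟨n, hn⟩ := exists_nat_one_div_lt hd
        exact ⟨n, ⟨x, y⟩, ⟨hy.symm, by push_cast; linarith⟩, rfl⟩
      · rintro ⟨n, ⟨⟨a, b⟩, ⟨hab, hd⟩, rfl⟩⟩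
        intro hfix
        have : b ∈ h ⁻¹' {h a} := by simp [hab.symm]
        rw [hfix] at this
        simp only [Set.mem_singleton_iff] at this
        rw [this] at hd
        simp at hd
        have : (0:ℝ) < 1/(n+1 : ℝ) := by positivity
        linarith
    have : MeasurableSet Sᶜ := by
      rw [hcompl]
      refine MeasurableSet.iUnion fun n => ?_
      have hK : IsCompact {p : X₁ × X₁ | h p.1 = h p.2 ∧ 1/(n+1 : ℝ) ≤ dist p.1 p.2} := by
        apply IsClosed.isCompact
        apply IsClosed.inter
        · exact isClosed_eq (hh.comp continuous_fst) (hh.comp continuous_snd)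
        · exact isClosed_le continuous_const (continuous_dist)
      exact (hK.image continuous_fst).isClosed.measurableSet
    simpa using this.compl
  have hScompl : μ₀ Sᶜ = 0 := by
    rw [measure_compl hmeasS (measure_ne_top _ _), hinj, measure_univ]
    simp
  have hc₁ : IsCompact (h '' A₁) := (hA₁.isCompact).image hh
  have hc₂ : IsCompact (h '' A₂) := (hA₂.isCompact).image hh
  rw [Measure.map_apply hh.measurable
    ((hc₁.isClosed.measurableSet).inter (hc₂.isClosed.measurableSet))]
  have hsub : h ⁻¹' (h '' A₁ ∩ h '' A₂) ⊆ (A₁ ∩ A₂) ∪ Sᶜ := by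
    intro x hx
    by_cases hxS : x ∈ S
    · left
      obtain ⟨⟨a₁, ha₁, ha₁x⟩, ⟨a₂, ha₂, ha₂x⟩⟩ := hx
      have e₁ : a₁ = x := by
        have : a₁ ∈ h ⁻¹' {h x} := by simp [ha₁x]
        rwa [hxS] at this
      have e₂ : a₂ = x := by
        have : a₂ ∈ h ⁻¹' {h x} := by simp [ha₂x]
        rwa [hxS] at this
      exact ⟨e₁ ▸ ha₁, e₂ ▸ ha₂⟩
    · right; exact hxS
  exact le_antisymm (le_trans (measure_mono hsub)
    (le_of_eq (measure_union_null hzero hScompl))) zero_le'
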